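/- Let M be the bordered diagonal matrix as above, with all α_i pairwise distinct and all b_i nonzero. Then λ ∈ ℝ \ {α_1, ..., α_{p-1}} is an eigenvalue of M if and only if α = λ + Σ_{i=1}^{p-1} b_i² / (α_i - λ). -/
import Mathlib


open Matrix

/-- For the bordered diagonal matrix with pairwise distinct diagonal entries `d i`
and nonzero border entries `b i`, a real number `lam` different from all `d i` is
an eigenvalue iff `α = lam + ∑ i, b i ^ 2 / (d i - lam)`. -/
theorem stmt4 (k : ℕ) (α : ℝ) (b d : Fin k → ℝ)
    (hd : Function.Injective d) (hb : ∀ i, b i ≠ 0)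
    (M : Matrix (Unit ⊕ Fin k) (Unit ⊕ Fin k) ℝ)
    (hM11 : M (Sum.inl ()) (Sum.inl ()) = α)
    (hMrow : ∀ i, M (Sum.inl ()) (Sum.inr i) = b i)
    (hMcol : ∀ i, M (Sum.inr i) (Sum.inl ()) = b i)
    (hMdiag : ∀ i j, M (Sum.inr i) (Sum.inr j) = if i = j then d i else 0)
    (lam : ℝ) (hlam : ∀ i, lam ≠ d i) :
    lam ∈ spectrum ℝ M ↔ α = lam + ∑ i, b i ^ 2 / (d i - lam) := by
  have hne : ∀ i, lam - d i ≠ 0 := fun i => sub_ne_zero.mpr (hlam i)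
  have hne' : ∀ i, d i - lam ≠ 0 := fun i => sub_ne_zero.mpr (Ne.symm (hlam i))
  have hMinl : ∀ v : (Unit ⊕ Fin k) → ℝ, (M *ᵥ v) (Sum.inl ()) =
      α * v (Sum.inl ()) + ∑ i, b i * v (Sum.inr i) := by
    intro v
    simp [mulVec, dotProduct, Fintype.sum_sum_type, hM11, hMrow]
  have hMinr : ∀ (v : (Unit ⊕ Fin k) → ℝ) i, (M *ᵥ v) (Sum.inr i) =
      b i * v (Sum.inl ()) + d i * v (Sum.inr i) := by
    intro v i
    simp [mulVec, dotProduct, Fintype.sum_sum_type, hMcol, hMdiag, ite_mul,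
      Finset.sum_ite_eq]
  have hspec : lam ∈ spectrum ℝ M ↔
      ∃ v : (Unit ⊕ Fin k) → ℝ, v ≠ 0 ∧ (lam • (1 : Matrix (Unit ⊕ Fin k) (Unit ⊕ Fin k) ℝ) - M) *ᵥ v = 0 := by
    rw [spectrum.mem_iff, Matrix.isUnit_iff_isUnit_det, isUnit_iff_ne_zero, not_ne_iff,
      ← Matrix.exists_mulVec_eq_zero_iff, Algebra.algebraMap_eq_smul_one]
  have hentry : ∀ (v : (Unit ⊕ Fin k) → ℝ) j,
      ((lam • (1 : Matrix (Unit ⊕ Fin k) (Unit ⊕ Fin k) ℝ) - M) *ᵥ v) j = lam * v j - (M *ᵥ v) j := by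
    intro v j
    simp [sub_mulVec, smul_mulVec, one_mulVec]
  rw [hspec]
  constructor
  · rintro ⟨v, hv0, hveq⟩
    set x := v (Sum.inl ()) with hx
    have hrow : ∀ i, v (Sum.inr i) = b i * x / (lam - d i) := by
      intro i
      have h := congrFun hveq (Sum.inr i)
      rw [hentry, hMinr] at h
      simp only [Pi.zero_apply] at h
      rw [eq_div_iff (hne i)]
      linarith
    have hx0 : x ≠ 0 := by
      intro h0
      apply hv0
      funext j
      cases j with
      | inl u => cases u; simpa [hx] using h0
      | inr i => simp [hrow i, h0]
    have h := congrFun hveq (Sum.inl ())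
    rw [hentry, hMinl] at h
    simp only [Pi.zero_apply] at h
    have hsum : ∑ i, b i * v (Sum.inr i) = -(∑ i, b i ^ 2 / (d i - lam)) * x := by
      rw [← Finset.sum_neg_distrib, Finset.sum_mul]
      apply Finset.sum_congr rfl
      intro i _
      rw [hrow i]
      field_simp [hne i, hne' i]
      ring
    rw [hsum] at h
    have hkey : (lam - α + ∑ i, b i ^ 2 / (d i - lam)) * x = 0 := by linear_combination h
    rcases mul_eq_zero.mp hkey with h1 | h1
    · linarith
    · exact absurd h1 hx0
  · intro hα
    refine ⟨Sum.elim (fun _ => (1:ℝ)) (fun i => b i / (lam - d i)), ?_, ?_⟩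
    · intro h0
      have := congrFun h0 (Sum.inl ())
      simp at this
    · funext j
      cases j with
      | inl u =>
        cases u
        rw [hentry, hMinl]
        simp only [Sum.elim_inl, Sum.elim_inr, Pi.zero_apply]
        have hsum : ∑ i, b i * (b i / (lam - d i))
            = -(∑ i, b i ^ 2 / (d i - lam)) := by
          rw [← Finset.sum_neg_distrib]
          apply Finset.sum_congr rfl
          intro i _
          field_simp [hne i, hne' i]
          ring
        rw [hsum, hα]; ring
      | inr i =>
        rw [hentry, hMinr]
        simp only [Sum.elim_inl, Sum.elim_inr, Pi.zero_apply]
        field_simp [hne i]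
        ring
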